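/- arXiv:2401.15056 — 2 statements merged into one kernel-verified Lean document; each statement's English description precedes it below -/
import Mathlib

section
/- Let T, N1, N2, j be integers with 0 ≤ j < N1, T+1-N1-N2 > 0, and let k = (T+1-N1-N2)(T+1-N2-j). For 0 ≤ i ≤ N1, define f(i) = k(T+1-max(i,j))/(T+1-N2-j) + k(i-min(i,j))/(T+1-N2-N1). Then f is maximized over i ∈ [0, N1] at i = N1, i.e. f(i) ≤ f(N1) = (T+1-N2-N1)(T+1-N1) + (T+1-N2-j)(N1-j) for all 0 ≤ i ≤ N1. -/
/-- the relay packet-length bound f(i) is maximized at i = N1. -/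
theorem stmt1 (T N1 N2 j : ℤ) (hj : 0 ≤ j) (hjN : j < N1)
    (hpos : 0 < T + 1 - N1 - N2)
    (k : ℝ) (hk : k = ((T : ℝ) + 1 - N1 - N2) * ((T : ℝ) + 1 - N2 - j))
    (f : ℤ → ℝ)
    (hf : ∀ i : ℤ, f i =
      k * ((T : ℝ) + 1 - ((max i j : ℤ) : ℝ)) / ((T : ℝ) + 1 - N2 - j)
      + k * (((i : ℝ)) - ((min i j : ℤ) : ℝ)) / ((T : ℝ) + 1 - N2 - N1)) :
    (∀ i : ℤ, 0 ≤ i → i ≤ N1 → f i ≤ f N1) ∧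
    f N1 = ((T : ℝ) + 1 - N2 - N1) * ((T : ℝ) + 1 - N1)
      + ((T : ℝ) + 1 - N2 - j) * ((N1 : ℝ) - j) := by
  have hb : (0:ℝ) < (T:ℝ)+1-N2-j := by
    have h : (0:ℤ) < T+1-N2-j := by omega
    exact_mod_cast h
  have ha : (0:ℝ) < (T:ℝ)+1-N2-N1 := by
    have h : (0:ℤ) < T+1-N2-N1 := by omega
    exact_mod_cast h
  have hfs : ∀ i : ℤ, f i = ((T:ℝ)+1-N1-N2) * ((T:ℝ)+1-((max i j:ℤ):ℝ))
      + ((T:ℝ)+1-N2-j) * ((i:ℝ)-((min i j:ℤ):ℝ)) := by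
    intro i
    rw [hf i, hk]
    field_simp
    ring
  constructor
  · intro i h0 hN
    rw [hfs i, hfs N1]
    rcases le_total i j with hij | hij
    · rw [max_eq_right hij, min_eq_left hij,
        max_eq_left hjN.le, min_eq_right hjN.le]
      have h1 : (i:ℝ) ≤ j := by exact_mod_cast hij
      have h2 : (j:ℝ) ≤ N1 := by exact_mod_cast hjN.le
      nlinarith
    · rw [max_eq_left hij, min_eq_right hij,
        max_eq_left hjN.le, min_eq_right hjN.le]
      have h1 : (j:ℝ) ≤ i := by exact_mod_cast hij
      have h2 : (i:ℝ) ≤ N1 := by exact_mod_cast hN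
      nlinarith
  · rw [hfs N1, max_eq_left hjN.le, min_eq_right hjN.le]
    ring
end

section
/- Let n, m, G, P be positive integers and consider GP symbols arranged in groups g_1, …, g_G each of size P, transmitted in order (all of g_1, then g_2, etc.) and partitioned into consecutive packets, each packet containing at most P symbols. If w packets are erased, then for every index p with 1 ≤ p ≤ P, at most w of the symbols g_1[p], g_2[p], …, g_G[p] are erased. -/
/-- G·P symbols in G ordered groups of size P (symbol g_r[p] sits
at position (r-1)·P + p), transmitted in order and partitioned into consecutive
packets (packet assignment `pkt` is monotone and each packet contains at most P
symbols).  If at most w packets are erased, then for every within-group index p,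
at most w of the symbols g_1[p], …, g_G[p] are erased. -/
theorem stmt5 (n m G P : ℕ) (hn : 0 < n) (hm : 0 < m) (hG : 0 < G) (hP : 0 < P)
    (pkt : ℕ → ℕ) (hmono : Monotone pkt)
    (hsize : ∀ c : ℕ, ((Finset.Icc 1 (G * P)).filter (fun x => pkt x = c)).card ≤ P)
    (E : Finset ℕ) (w : ℕ) (hE : E.card ≤ w) :
    ∀ p : ℕ, 1 ≤ p → p ≤ P →
      ((Finset.Icc 1 G).filter (fun r => pkt ((r - 1) * P + p) ∈ E)).card ≤ w := by
  intro p hp1 hpP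
  set f : ℕ → ℕ := fun r => pkt ((r - 1) * P + p) with hf
  -- key injectivity claim
  have key : ∀ r r' : ℕ, 1 ≤ r → r' ≤ G → r < r' → f r ≠ f r' := by
    intro r r' hr1 hr'G hrr' heq
    set c := f r with hc
    set x := (r - 1) * P + p with hx
    set x' := (r' - 1) * P + p with hx'
    have hxx' : x + P ≤ x' := by
      have : r - 1 + 1 ≤ r' - 1 := by omega
      have h2 : (r - 1) * P + P ≤ (r' - 1) * P := by
        calc (r - 1) * P + P = (r - 1 + 1) * P := by ring
          _ ≤ (r' - 1) * P := Nat.mul_le_mul_right P this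
      omega
    have hx'le : x' ≤ G * P := by
      have : r' - 1 + 1 ≤ G := by omega
      have h2 : (r' - 1) * P + P ≤ G * P := by
        calc (r' - 1) * P + P = (r' - 1 + 1) * P := by ring
          _ ≤ G * P := Nat.mul_le_mul_right P this
      omega
    have hx1 : 1 ≤ x := by omega
    -- all y in Icc x (x+P) map to c
    have hsub : Finset.Icc x (x + P) ⊆
        (Finset.Icc 1 (G * P)).filter (fun y => pkt y = c) := by
      intro y hy
      simp only [Finset.mem_Icc] at hy
      simp only [Finset.mem_filter, Finset.mem_Icc]
      refine ⟨⟨by omega, by omega⟩, ?_⟩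
      have h1 : pkt x ≤ pkt y := hmono hy.1
      have h2 : pkt y ≤ pkt x' := hmono (by omega)
      have h3 : pkt x = pkt x' := heq
      have h4 : c = pkt x := rfl
      omega
    have hcard := Finset.card_le_card hsub
    rw [Nat.card_Icc] at hcard
    have := hsize c
    omega
  have hinj : Set.InjOn f ((Finset.Icc 1 G).filter (fun r => f r ∈ E)) := by
    intro r hr r' hr' heq
    simp only [Finset.coe_filter, Set.mem_setOf_eq, Finset.mem_Icc] at hr hr'
    by_contra hne
    rcases Nat.lt_or_ge r r' with h | h
    · exact key r r' hr.1.1 hr'.1.2 h heq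
    · exact key r' r hr'.1.1 hr.1.2 (by omega) heq.symm
  have := Finset.card_le_card_of_injOn f
    (fun r hr => (Finset.mem_filter.mp hr).2) hinj
  exact le_trans this hE
end
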